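/- arXiv:2311.13877 — 2 statements merged into one kernel-verified Lean document; each statement's English description precedes it below -/
import Mathlib

section
/- Let f : ℝ^d → ℝ be L-smooth with L > 0, let x* be a global minimizer of f, and let x₀ ∈ ℝ^d satisfy |f(x₀) - f(x*)| ≤ R. On a probability space with filtration (F_t), suppose SGD is run for T iterations as follows: at each iteration t ∈ {1,…,T}, a stochastic gradient g_t = ∇f(x_{t-1}) + ξ_t is received, where the noise ξ_t satisfies E[ξ_t | F_{t-1}] = 0 and E[‖ξ_t‖² | F_{t-1}] ≤ σ² (with x_{t-1} being F_{t-1}-measurable and σ > 0), and the iterate is updated by x_t = x_{t-1} - (1/L) · (⟨∇f(x_{t-1}), g_t⟩ / ‖g_t‖²) · g_t (with the step taken to be 0 if g_t = 0). Then min_{t=1,…,T} E[‖∇f(x_t)‖²] ≤ 2LR/T + σ·√(2LR/T). -/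
open MeasureTheory ProbabilityTheory
open scoped RealInnerProductSpace

set_option maxHeartbeats 1000000


section descent
variable {d : ℕ} {f : EuclideanSpace ℝ (Fin d) → ℝ} {L : ℝ}

theorem my_descent (hL : 0 < L) (hdiff : Differentiable ℝ f)
    (hsmooth : ∀ x y, ‖gradient f x - gradient f y‖ ≤ L * ‖x - y‖)
    (x v : EuclideanSpace ℝ (Fin d)) :
    f (x + v) ≤ f x + ⟪gradient f x, v⟫ + L / 2 * ‖v‖ ^ 2 := by
  have hgradcont : Continuous (gradient f) := by
    refine (LipschitzWith.of_dist_le_mul (K := L.toNNReal) (fun a b => ?_)).continuous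
    simpa [dist_eq_norm, Real.coe_toNNReal _ hL.le] using hsmooth a b
  set φ : ℝ → ℝ := fun t => f (x + t • v) with hφ
  have hline : ∀ t : ℝ, HasDerivAt (fun s : ℝ => x + s • v) v t := by
    intro t
    simpa using ((hasDerivAt_id t).smul_const v).const_add x
  have hder : ∀ t : ℝ, HasDerivAt φ (⟪gradient f (x + t • v), v⟫) t := by
    intro t
    have hf := (hdiff (x + t • v)).hasGradientAt
    have hF : HasFDerivAt f (InnerProductSpace.toDual ℝ _ (gradient f (x + t • v))) (x + t • v) :=
      hf.hasFDerivAt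
    have h := hF.comp_hasDerivAt t (hline t)
    exact h
  have hcont : Continuous fun t : ℝ => ⟪gradient f (x + t • v), v⟫ := by
    exact (hgradcont.comp (by continuity)).inner continuous_const
  have hint : ∫ t in (0:ℝ)..1, ⟪gradient f (x + t • v), v⟫ = φ 1 - φ 0 := by
    exact intervalIntegral.integral_eq_sub_of_hasDerivAt (fun t _ => hder t)
      (hcont.intervalIntegrable 0 1)
  have hbound : ∀ t ∈ Set.Icc (0:ℝ) 1,
      ⟪gradient f (x + t • v), v⟫ ≤ ⟪gradient f x, v⟫ + L * t * ‖v‖ ^ 2 := by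
    intro t ht
    have h1 : ⟪gradient f (x + t • v) - gradient f x, v⟫ ≤ ‖gradient f (x + t • v) - gradient f x‖ * ‖v‖ :=
      real_inner_le_norm _ _
    have h2 : ‖gradient f (x + t • v) - gradient f x‖ ≤ L * (t * ‖v‖) := by
      have := hsmooth (x + t • v) x
      simpa [norm_smul, abs_of_nonneg ht.1] using this
    have h3 : ⟪gradient f (x + t • v) - gradient f x, v⟫ ≤ L * t * ‖v‖ ^ 2 := by
      calc ⟪gradient f (x + t • v) - gradient f x, v⟫ ≤ ‖gradient f (x + t • v) - gradient f x‖ * ‖v‖ := h1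
        _ ≤ L * (t * ‖v‖) * ‖v‖ := by
            exact mul_le_mul_of_nonneg_right h2 (norm_nonneg v)
        _ = L * t * ‖v‖ ^ 2 := by ring
    have := inner_sub_left (𝕜 := ℝ) (gradient f (x + t • v)) (gradient f x) v
    linarith [h3, this.symm.le, this.le]
  have hmono : ∫ t in (0:ℝ)..1, ⟪gradient f (x + t • v), v⟫ ≤
      ∫ t in (0:ℝ)..1, (⟪gradient f x, v⟫ + L * t * ‖v‖ ^ 2) := by
    refine intervalIntegral.integral_mono_on (by norm_num) (hcont.intervalIntegrable 0 1) ?_ hbound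
    exact ((continuous_const.add ((continuous_const.mul continuous_id).mul continuous_const)).intervalIntegrable 0 1)
  have hval : ∫ t in (0:ℝ)..1, (⟪gradient f x, v⟫ + L * t * ‖v‖ ^ 2) =
      ⟪gradient f x, v⟫ + L / 2 * ‖v‖ ^ 2 := by
    have hc1 : IntervalIntegrable (fun _ : ℝ => ⟪gradient f x, v⟫) MeasureTheory.volume 0 1 :=
      intervalIntegrable_const
    have hc2 : IntervalIntegrable (fun t : ℝ => L * t * ‖v‖ ^ 2) MeasureTheory.volume 0 1 :=
      (((continuous_const.mul continuous_id).mul continuous_const).intervalIntegrable 0 1)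
    rw [intervalIntegral.integral_add hc1 hc2]
    rw [intervalIntegral.integral_const]
    rw [show (fun t : ℝ => L * t * ‖v‖ ^ 2) = fun t : ℝ => t * (L * ‖v‖ ^ 2) from funext fun t => by ring]
    rw [intervalIntegral.integral_mul_const, integral_id]
    simp; ring
  have : φ 1 - φ 0 ≤ ⟪gradient f x, v⟫ + L / 2 * ‖v‖ ^ 2 := by
    rw [← hint]; rw [hval] at hmono; exact hmono
  have h0 : φ 0 = f x := by simp [hφ]
  have h1 : φ 1 = f (x + v) := by simp [hφ]
  linarith
end descent


theorem my_cs {Ω : Type*} [MeasurableSpace Ω] {μ : Measure Ω}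
    {u w : Ω → ℝ} (hu : ∀ ω, 0 ≤ u ω) (hw : ∀ ω, 0 ≤ w ω)
    (hu2 : Integrable (fun ω => u ω ^ 2) μ) (hw2 : Integrable (fun ω => w ω ^ 2) μ)
    (huw : Integrable (fun ω => u ω * w ω) μ) :
    (∫ ω, u ω * w ω ∂μ) ^ 2 ≤ (∫ ω, u ω ^ 2 ∂μ) * ∫ ω, w ω ^ 2 ∂μ := by
  set a := ∫ ω, u ω ^ 2 ∂μ
  set b := ∫ ω, w ω ^ 2 ∂μ
  set I := ∫ ω, u ω * w ω ∂μ
  have ha : 0 ≤ a := integral_nonneg fun ω => sq_nonneg _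
  have hb : 0 ≤ b := integral_nonneg fun ω => sq_nonneg _
  rcases eq_or_lt_of_le hb with hb0 | hbpos
  · -- b = 0 → w = 0 a.e. → I = 0
    have hw0 : (fun ω => w ω ^ 2) =ᵐ[μ] 0 := by
      refine (integral_eq_zero_iff_of_nonneg (fun ω => sq_nonneg _) hw2).mp hb0.symm
    have hI : I = 0 := by
      refine integral_eq_zero_of_ae ?_
      filter_upwards [hw0] with ω h
      have : w ω = 0 := by
        have := h
        simpa [pow_eq_zero_iff] using this
      simp [this]
    simp [hI, ← hb0]
  · -- expand ∫ (b • u - I • w)^2 ≥ 0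
    have hexp : ∀ ω, (b * u ω - I * w ω) ^ 2
        = b ^ 2 * u ω ^ 2 - (2 * b * I) * (u ω * w ω) + I ^ 2 * w ω ^ 2 := by
      intro ω; ring
    have hint : Integrable (fun ω => (b * u ω - I * w ω) ^ 2) μ := by
      simp_rw [hexp]
      exact ((hu2.const_mul _).sub (huw.const_mul _)).add (hw2.const_mul _)
    have h0 : 0 ≤ ∫ ω, (b * u ω - I * w ω) ^ 2 ∂μ := integral_nonneg fun ω => sq_nonneg _
    have hval : ∫ ω, (b * u ω - I * w ω) ^ 2 ∂μ = b ^ 2 * a - (2 * b * I) * I + I ^ 2 * b := by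
      simp_rw [hexp]
      rw [integral_add (f := fun ω => b ^ 2 * u ω ^ 2 - 2 * b * I * (u ω * w ω))
          (g := fun ω => I ^ 2 * w ω ^ 2)
          ((hu2.const_mul _).sub (huw.const_mul _)) (hw2.const_mul _),
        integral_sub (f := fun ω => b ^ 2 * u ω ^ 2) (g := fun ω => 2 * b * I * (u ω * w ω))
          (hu2.const_mul _) (huw.const_mul _),
        integral_const_mul, integral_const_mul, integral_const_mul]
    rw [hval] at h0
    nlinarith [hbpos]

theorem my_final {G c σ : ℝ} (hG : 0 ≤ G) (hc : 0 ≤ c) (hσ : 0 < σ)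
    (h : G ^ 2 ≤ c * (G + σ ^ 2)) : G ≤ c + σ * Real.sqrt c := by
  by_contra hcon
  push_neg at hcon
  have hs : Real.sqrt c ^ 2 = c := Real.sq_sqrt hc
  have hs0 : 0 ≤ Real.sqrt c := Real.sqrt_nonneg c
  set s := Real.sqrt c with hsdef
  have h2 : G * (G - c) ≤ c * σ ^ 2 := by nlinarith [h]
  have h3 : (c + σ * s) * (σ * s) < G * (G - c) := by
    have ha : c + σ * s < G := hcon
    have hb2 : σ * s < G - c := by nlinarith [hcon, mul_nonneg hσ.le hs0]
    exact mul_lt_mul'' ha hb2 (by positivity) (by positivity)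
  nlinarith [h2, h3, hs, mul_nonneg (mul_nonneg hc hσ.le) hs0]


theorem coord_le_norm {d : ℕ} (v : EuclideanSpace ℝ (Fin d)) (i : Fin d) : |v i| ≤ ‖v‖ := by
  rw [EuclideanSpace.norm_eq]
  rw [show |v i| = Real.sqrt (|v i| ^ 2) from (Real.sqrt_sq (abs_nonneg _)).symm]
  apply Real.sqrt_le_sqrt
  rw [sq_abs]
  exact Finset.single_le_sum (f := fun j => ‖v j‖ ^ 2) (fun j _ => by positivity) (Finset.mem_univ i)
    |>.trans_eq' (by simp [Real.norm_eq_abs, sq_abs])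

theorem my_zero_mean {Ω : Type*} {m0 : MeasurableSpace Ω} {μ : Measure Ω}
    [IsProbabilityMeasure μ] (F : MeasureTheory.Filtration ℕ m0) (t : ℕ) {d : ℕ}
    (v ξ' : Ω → EuclideanSpace ℝ (Fin d)) (hv : StronglyMeasurable[F t] v)
    {K : ℝ} (hvb : ∀ ω, ‖v ω‖ ≤ K) (hξ : Integrable ξ' μ)
    (h : μ[ξ'|F t] =ᵐ[μ] 0) : ∫ ω, ⟪v ω, ξ' ω⟫ ∂μ = 0 := by
  haveI : SigmaFinite (μ.trim (F.le t)) := inferInstance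
  have hcoord : ∀ i : Fin d, μ[fun ω => ξ' ω i|F t] =ᵐ[μ] 0 := by
    intro i
    have hξi : Integrable (fun ω => ξ' ω i) μ :=
      (EuclideanSpace.proj i : EuclideanSpace ℝ (Fin d) →L[ℝ] ℝ).integrable_comp hξ
    refine (ae_eq_condExp_of_forall_setIntegral_eq (F.le t) hξi
      (fun s _ _ => (integrable_zero Ω ℝ μ).integrableOn)
      (fun s hs hμs => ?_)
      ((stronglyMeasurable_zero : StronglyMeasurable[F t] (fun _ : Ω => (0:ℝ))).aestronglyMeasurable)).symm
    have h1 : ∫ ω in s, ξ' ω ∂μ = 0 := by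
      rw [← setIntegral_condExp (F.le t) hξ hs]
      have h' : μ[ξ'|F t] =ᵐ[μ.restrict s] 0 := h.filter_mono (ae_mono Measure.restrict_le_self)
      rw [integral_congr_ae h']
      simp
    have h2 : (∫ ω in s, ξ' ω ∂μ) i = ∫ ω in s, ξ' ω i ∂μ := by
      simpa using
        ((EuclideanSpace.proj i : EuclideanSpace ℝ (Fin d) →L[ℝ] ℝ).integral_comp_comm
          (hξ.integrableOn (s := s))).symm
    rw [← h2, h1]
    simp
  have hvi : ∀ i : Fin d, StronglyMeasurable[F t] (fun ω => v ω i) := fun i =>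
    (EuclideanSpace.proj i : EuclideanSpace ℝ (Fin d) →L[ℝ] ℝ).continuous.comp_stronglyMeasurable hv
  have hterm : ∀ i : Fin d, ∫ ω, v ω i * ξ' ω i ∂μ = 0 := by
    intro i
    have hξi : Integrable (fun ω => ξ' ω i) μ :=
      (EuclideanSpace.proj i : EuclideanSpace ℝ (Fin d) →L[ℝ] ℝ).integrable_comp hξ
    have hprod : Integrable (fun ω => v ω i * ξ' ω i) μ := by
      refine hξi.bdd_mul (c := |K|) ((hvi i).mono (F.le t)).aestronglyMeasurable (Filter.Eventually.of_forall fun ω => ?_)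
      exact (coord_le_norm (v ω) i).trans ((hvb ω).trans (le_abs_self K))
    have hpull : μ[fun ω => v ω i * ξ' ω i|F t] =ᵐ[μ] fun ω => v ω i * (μ[fun ω' => ξ' ω' i|F t]) ω := by
      exact condExp_mul_of_stronglyMeasurable_left (hvi i) hprod hξi
    have : μ[fun ω => v ω i * ξ' ω i|F t] =ᵐ[μ] 0 := by
      filter_upwards [hpull, hcoord i] with ω h1 h2
      simp [h1, h2]
    rw [← integral_condExp (μ := μ) (F.le t) (f := fun ω => v ω i * ξ' ω i),
      integral_congr_ae this]
    simp
  have hinner : ∀ ω, ⟪v ω, ξ' ω⟫ = ∑ i : Fin d, v ω i * ξ' ω i := by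
    intro ω
    simp [PiLp.inner_apply, RCLike.inner_apply, conj_trivial]
    exact Finset.sum_congr rfl fun i _ => mul_comm _ _
  have hprods : ∀ i : Fin d, Integrable (fun ω => v ω i * ξ' ω i) μ := by
    intro i
    have hξi : Integrable (fun ω => ξ' ω i) μ :=
      (EuclideanSpace.proj i : EuclideanSpace ℝ (Fin d) →L[ℝ] ℝ).integrable_comp hξ
    refine hξi.bdd_mul (c := |K|) ((hvi i).mono (F.le t)).aestronglyMeasurable (Filter.Eventually.of_forall fun ω => ?_)
    exact (coord_le_norm (v ω) i).trans ((hvb ω).trans (le_abs_self K))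
  calc ∫ ω, ⟪v ω, ξ' ω⟫ ∂μ = ∫ ω, ∑ i : Fin d, v ω i * ξ' ω i ∂μ := by
        simp_rw [hinner]
    _ = ∑ i : Fin d, ∫ ω, v ω i * ξ' ω i ∂μ := integral_finset_sum _ fun i _ => hprods i
    _ = 0 := by simp [hterm]


/-- SGD with the locally optimal step size
`ηₜ = ⟨∇f(x_{t-1}), gₜ⟩/(L‖gₜ‖²)` in the direction of the stochastic gradient
`gₜ = ∇f(x_{t-1}) + ξₜ` (zero conditional mean, conditional second moment `≤ σ²`),
on an `L`-smooth `f` with `|f(x₀) - f(x*)| ≤ R` for a global minimizer `x*`, satisfies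
`min_{t=1..T} E[‖∇f(xₜ)‖²] ≤ 2LR/T + σ√(2LR/T)`.
(When `gₜ = 0`, division by zero makes the step `0`, matching the convention.) -/
theorem stmt_1 {d : ℕ} {f : EuclideanSpace ℝ (Fin d) → ℝ} {L R σ : ℝ}
    (hL : 0 < L) (hσ : 0 < σ)
    (hdiff : Differentiable ℝ f)
    (hsmooth : ∀ x y, ‖gradient f x - gradient f y‖ ≤ L * ‖x - y‖)
    (xstar : EuclideanSpace ℝ (Fin d)) (hmin : ∀ y, f xstar ≤ f y)
    {Ω : Type*} {m0 : MeasurableSpace Ω} {μ : Measure Ω} [IsProbabilityMeasure μ]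
    (F : Filtration ℕ m0)
    (T : ℕ) (hT : 1 ≤ T)
    (x : ℕ → Ω → EuclideanSpace ℝ (Fin d))
    (ξ : ℕ → Ω → EuclideanSpace ℝ (Fin d))
    (hξmeas : ∀ t, Measurable (ξ t))
    (hξint : ∀ t, Integrable (ξ t) μ)
    (hξint2 : ∀ t, Integrable (fun ω => ‖ξ t ω‖ ^ 2) μ)
    (x₀ : EuclideanSpace ℝ (Fin d)) (hx0 : ∀ ω, x 0 ω = x₀)
    (hR : |f x₀ - f xstar| ≤ R)
    (hadapted : ∀ t, 1 ≤ t → t ≤ T → StronglyMeasurable[F (t - 1)] (x (t - 1)))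
    (hmean : ∀ t, 1 ≤ t → t ≤ T → μ[ξ t|F (t - 1)] =ᵐ[μ] 0)
    (hvar : ∀ t, 1 ≤ t → t ≤ T →
      ∀ᵐ ω ∂μ, (μ[fun ω' => ‖ξ t ω'‖ ^ 2|F (t - 1)]) ω ≤ σ ^ 2)
    (hupdate : ∀ t, 1 ≤ t → t ≤ T → ∀ ω,
      x t ω = x (t - 1) ω -
        ((1 / L) * (⟪gradient f (x (t - 1) ω), gradient f (x (t - 1) ω) + ξ t ω⟫ /
            ‖gradient f (x (t - 1) ω) + ξ t ω‖ ^ 2)) •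
          (gradient f (x (t - 1) ω) + ξ t ω)) :
    ∃ t, 1 ≤ t ∧ t ≤ T ∧
      ∫ ω, ‖gradient f (x t ω)‖ ^ 2 ∂μ ≤
        2 * L * R / T + σ * Real.sqrt (2 * L * R / T) := by
  have hLne : L ≠ 0 := ne_of_gt hL
  have hfR : f x₀ - f xstar ≤ R := le_of_abs_le hR
  have hR0 : 0 ≤ R := le_trans (abs_nonneg _) hR
  have hgradcont : Continuous (gradient f) := by
    refine (LipschitzWith.of_dist_le_mul (K := L.toNNReal) (fun a b => ?_)).continuous
    simpa [dist_eq_norm, Real.coe_toNNReal _ hL.le] using hsmooth a b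
  have hdescent : ∀ p v, f (p + v) ≤ f p + ⟪gradient f p, v⟫ + L / 2 * ‖v‖ ^ 2 :=
    my_descent hL hdiff hsmooth
  -- PL-type inequality
  have hPL : ∀ y, ‖gradient f y‖ ^ 2 ≤ 2 * L * (f y - f xstar) := by
    intro y
    have h := hdescent y (-((1 / L) • gradient f y))
    have h2 : f xstar ≤ f (y + -((1 / L) • gradient f y)) := hmin _
    rw [inner_neg_right, real_inner_smul_right, real_inner_self_eq_norm_sq, norm_neg,
      norm_smul, mul_pow] at h
    have habs : ‖(1 : ℝ) / L‖ ^ 2 = (1 / L) ^ 2 := by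
      rw [Real.norm_eq_abs, sq_abs]
    rw [habs] at h
    have hexp : -(1 / L * ‖gradient f y‖ ^ 2) + L / 2 * ((1 / L) ^ 2 * ‖gradient f y‖ ^ 2)
        = -(1 / (2 * L) * ‖gradient f y‖ ^ 2) := by
      field_simp
      ring
    have h3 : 1 / (2 * L) * ‖gradient f y‖ ^ 2 ≤ f y - f xstar := by linarith
    have h4 := mul_le_mul_of_nonneg_left h3 (by positivity : (0:ℝ) ≤ 2 * L)
    have hid : 2 * L * (1 / (2 * L) * ‖gradient f y‖ ^ 2) = ‖gradient f y‖ ^ 2 := by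
      field_simp
    rw [hid] at h4
    exact h4
  -- the per-step decrease
  set D : ℕ → Ω → ℝ := fun t ω =>
    ⟪gradient f (x (t - 1) ω), gradient f (x (t - 1) ω) + ξ t ω⟫ ^ 2 /
      (2 * L * ‖gradient f (x (t - 1) ω) + ξ t ω‖ ^ 2) with hD
  have hDnonneg : ∀ t ω, 0 ≤ D t ω := fun t ω =>
    div_nonneg (sq_nonneg _) (by positivity)
  have hstep : ∀ t, 1 ≤ t → t ≤ T → ∀ ω, f (x t ω) + D t ω ≤ f (x (t - 1) ω) := by
    intro t h1 h2 ω
    set u := gradient f (x (t - 1) ω) with hu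
    set w := u + ξ t ω with hw
    set A := ⟪u, w⟫ with hA
    have hDval : D t ω = A ^ 2 / (2 * L * ‖w‖ ^ 2) := rfl
    have hupd := hupdate t h1 h2 ω
    by_cases hw0 : w = 0
    · have hA0 : A = 0 := by rw [hA, hw0, inner_zero_right]
      have hxx : x t ω = x (t - 1) ω := by
        rw [hupd, ← hw, hw0, smul_zero, sub_zero]
      rw [hxx, hDval, hA0]
      simp
    · have hwpos : (0:ℝ) < ‖w‖ ^ 2 := pow_pos (norm_pos_iff.mpr hw0) 2
      set c : ℝ := -((1 / L) * (A / ‖w‖ ^ 2)) with hc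
      have hxx : x t ω = x (t - 1) ω + c • w := by
        rw [hupd, ← hw, ← hA, hc, sub_eq_add_neg, ← neg_smul]
      have h := hdescent (x (t - 1) ω) (c • w)
      rw [← hxx, ← hu, real_inner_smul_right, ← hA, norm_smul, mul_pow,
        Real.norm_eq_abs, sq_abs] at h
      have key : c * A + L / 2 * (c ^ 2 * ‖w‖ ^ 2) = -(A ^ 2 / (2 * L * ‖w‖ ^ 2)) := by
        rw [hc]
        field_simp
        ring
      rw [hDval]
      linarith [h, key]
  have hfmonostep : ∀ t, 1 ≤ t → t ≤ T → ∀ ω, f (x t ω) ≤ f (x (t - 1) ω) := by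
    intro t h1 h2 ω
    linarith [hstep t h1 h2 ω, hDnonneg t ω]
  have hfx0 : ∀ s, s ≤ T → ∀ ω, f (x s ω) ≤ f x₀ := by
    intro s
    induction s with
    | zero => intro _ ω; rw [hx0 ω]
    | succ n ih =>
      intro hsT ω
      have h1 := hfmonostep (n + 1) (by omega) hsT ω
      simp only [Nat.add_sub_cancel] at h1
      exact le_trans h1 (ih (by omega) ω)
  have hgradbd : ∀ s, s ≤ T → ∀ ω, ‖gradient f (x s ω)‖ ^ 2 ≤ 2 * L * R := by
    intro s hs ω
    have h1 := hPL (x s ω)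
    have h2 := hfx0 s hs ω
    nlinarith [hL]
  have hnormbd : ∀ s, s ≤ T → ∀ ω, ‖gradient f (x s ω)‖ ≤ Real.sqrt (2 * L * R) := by
    intro s hs ω
    have := Real.sqrt_le_sqrt (hgradbd s hs ω)
    rwa [Real.sqrt_sq (norm_nonneg _)] at this
  -- measurability of iterates
  have hmeasx : ∀ s, s ≤ T → Measurable (x s) := by
    intro s hs
    rcases Nat.lt_or_ge s T with hlt | hge
    · have h := hadapted (s + 1) (by omega) (by omega)
      simp only [Nat.add_sub_cancel] at h
      exact (h.mono (F.le s)).measurable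
    · have hsT : s = T := le_antisymm hs hge
      subst hsT
      have hprev : Measurable (x (s - 1)) :=
        ((hadapted s hT le_rfl).mono (F.le _)).measurable
      have hxg : Measurable fun ω => gradient f (x (s - 1) ω) :=
        hgradcont.measurable.comp hprev
      have hgm : Measurable fun ω => gradient f (x (s - 1) ω) + ξ s ω :=
        hxg.add (hξmeas s)
      have hAm : Measurable fun ω =>
          ⟪gradient f (x (s - 1) ω), gradient f (x (s - 1) ω) + ξ s ω⟫ :=
        hxg.inner hgm
      have hsml : Measurable fun ω =>
          (1 / L) * (⟪gradient f (x (s - 1) ω), gradient f (x (s - 1) ω) + ξ s ω⟫ /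
            ‖gradient f (x (s - 1) ω) + ξ s ω‖ ^ 2) :=
        ((hAm.div ((hgm.norm).pow_const 2)).const_mul (1 / L))
      have heq : x s = fun ω => x (s - 1) ω -
          ((1 / L) * (⟪gradient f (x (s - 1) ω), gradient f (x (s - 1) ω) + ξ s ω⟫ /
            ‖gradient f (x (s - 1) ω) + ξ s ω‖ ^ 2)) •
          (gradient f (x (s - 1) ω) + ξ s ω) := funext (hupdate s hT le_rfl)
      rw [heq]
      exact hprev.sub (hsml.smul hgm)
  -- integrability of key functions
  have hgradint : ∀ s, s ≤ T → Integrable (fun ω => ‖gradient f (x s ω)‖ ^ 2) μ := by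
    intro s hs
    refine (integrable_const (2 * L * R)).mono' ?_ ?_
    · exact ((hgradcont.measurable.comp (hmeasx s hs)).norm.pow_const 2).aestronglyMeasurable
    · filter_upwards with ω
      rw [Real.norm_eq_abs, abs_of_nonneg (by positivity)]
      exact hgradbd s hs ω
  have hDmeas : ∀ t, 1 ≤ t → t ≤ T → Measurable (D t) := by
    intro t h1 h2
    have hprev : Measurable (x (t - 1)) := hmeasx (t - 1) (by omega)
    have hxg : Measurable fun ω => gradient f (x (t - 1) ω) :=
      hgradcont.measurable.comp hprev
    have hgm : Measurable fun ω => gradient f (x (t - 1) ω) + ξ t ω := hxg.add (hξmeas t)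
    exact ((hxg.inner hgm).pow_const 2).div (((hgm.norm).pow_const 2).const_mul (2 * L))
  have hDbd : ∀ t, 1 ≤ t → t ≤ T → ∀ ω, D t ω ≤ R := by
    intro t h1 h2 ω
    set u := gradient f (x (t - 1) ω) with hu
    set w := u + ξ t ω with hw
    have hDval : D t ω = ⟪u, w⟫ ^ 2 / (2 * L * ‖w‖ ^ 2) := rfl
    by_cases hw0 : w = 0
    · rw [hDval, hw0]
      simpa using hR0
    · have hwpos : (0:ℝ) < ‖w‖ ^ 2 := pow_pos (norm_pos_iff.mpr hw0) 2
      have hcs : ⟪u, w⟫ ^ 2 ≤ ‖u‖ ^ 2 * ‖w‖ ^ 2 := by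
        calc ⟪u, w⟫ ^ 2 = |⟪u, w⟫| ^ 2 := (sq_abs _).symm
          _ ≤ (‖u‖ * ‖w‖) ^ 2 :=
            pow_le_pow_left₀ (abs_nonneg _) (abs_real_inner_le_norm u w) 2
          _ = ‖u‖ ^ 2 * ‖w‖ ^ 2 := mul_pow _ _ 2
      have hub : ‖u‖ ^ 2 ≤ 2 * L * R := hgradbd (t - 1) (by omega) ω
      rw [hDval, div_le_iff₀ (by positivity)]
      calc ⟪u, w⟫ ^ 2 ≤ ‖u‖ ^ 2 * ‖w‖ ^ 2 := hcs
        _ ≤ 2 * L * R * ‖w‖ ^ 2 := mul_le_mul_of_nonneg_right hub (sq_nonneg _)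
        _ = R * (2 * L * ‖w‖ ^ 2) := by ring
  have hDint : ∀ t, 1 ≤ t → t ≤ T → Integrable (D t) μ := by
    intro t h1 h2
    refine (integrable_const R).mono' (hDmeas t h1 h2).aestronglyMeasurable ?_
    filter_upwards with ω
    rw [Real.norm_eq_abs, abs_of_nonneg (hDnonneg t ω)]
    exact hDbd t h1 h2 ω
  have hfint : ∀ n, n ≤ T → Integrable (fun ω => f (x n ω)) μ := by
    intro n hn
    refine (integrable_const (max |f xstar| |f x₀|)).mono' ?_ ?_
    · exact (hdiff.continuous.measurable.comp (hmeasx n hn)).aestronglyMeasurable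
    · filter_upwards with ω
      rw [Real.norm_eq_abs]
      exact abs_le_max_abs_abs (hmin _) (hfx0 n hn ω)
  -- expected values
  set G : ℕ → ℝ := fun s => ∫ ω, ‖gradient f (x s ω)‖ ^ 2 ∂μ with hGdef
  set J : ℕ → ℝ := fun n => ∫ ω, f (x n ω) ∂μ with hJdef
  have hGnonneg : ∀ s, 0 ≤ G s := fun s => integral_nonneg fun ω => by positivity
  have hJstep : ∀ t, 1 ≤ t → t ≤ T → J t + ∫ ω, D t ω ∂μ ≤ J (t - 1) := by
    intro t h1 h2
    have hle : (fun ω => f (x t ω) + D t ω) ≤ fun ω => f (x (t - 1) ω) :=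
      fun ω => hstep t h1 h2 ω
    have h3 : ∫ ω, (f (x t ω) + D t ω) ∂μ ≤ ∫ ω, f (x (t - 1) ω) ∂μ :=
      integral_mono ((hfint t h2).add (hDint t h1 h2)) (hfint (t - 1) (by omega)) hle
    rwa [integral_add (f := fun ω => f (x t ω)) (g := fun ω => D t ω)
      (hfint t h2) (hDint t h1 h2)] at h3
  -- the key probabilistic estimate on each step
  have hptstep : ∀ t, 1 ≤ t → t ≤ T →
      G (t - 1) ^ 2 / (G (t - 1) + σ ^ 2) ≤ 2 * L * ∫ ω, D t ω ∂μ := by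
    intro t h1 h2
    set s := t - 1 with hs
    have hsT : s ≤ T := by omega
    have hxsm : StronglyMeasurable[F s] (x s) := hadapted t h1 h2
    have hprev : Measurable (x s) := (hxsm.mono (F.le s)).measurable
    set u : Ω → EuclideanSpace ℝ (Fin d) := fun ω => gradient f (x s ω) with hudef
    set g : Ω → EuclideanSpace ℝ (Fin d) := fun ω => u ω + ξ t ω with hgdef
    have hum : Measurable u := hgradcont.measurable.comp hprev
    have husm : StronglyMeasurable[F s] u :=
      hgradcont.comp_stronglyMeasurable hxsm
    have hgm : Measurable g := hum.add (hξmeas t)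
    have hubd : ∀ ω, ‖u ω‖ ≤ Real.sqrt (2 * L * R) := fun ω => hnormbd s hsT ω
    have hu2int : Integrable (fun ω => ‖u ω‖ ^ 2) μ := hgradint s hsT
    -- zero mean of ⟪u, ξ t⟫
    have hzm : ∫ ω, ⟪u ω, ξ t ω⟫ ∂μ = 0 :=
      my_zero_mean F s u (ξ t) husm hubd (hξint t) (hmean t h1 h2)
    have hinnerint : Integrable (fun ω => ⟪u ω, ξ t ω⟫) μ := by
      refine ((hξint t).norm.const_mul (Real.sqrt (2 * L * R))).mono'
        ((hum.inner (hξmeas t)).aestronglyMeasurable) ?_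
      filter_upwards with ω
      rw [Real.norm_eq_abs]
      exact (abs_real_inner_le_norm _ _).trans
        (mul_le_mul_of_nonneg_right (hubd ω) (norm_nonneg _))
    -- second moment bound
    have hxi2 : ∫ ω, ‖ξ t ω‖ ^ 2 ∂μ ≤ σ ^ 2 := by
      rw [← integral_condExp (F.le s) (f := fun ω => ‖ξ t ω‖ ^ 2)]
      calc ∫ ω, (μ[fun ω' => ‖ξ t ω'‖ ^ 2|F s]) ω ∂μ ≤ ∫ _ω, σ ^ 2 ∂μ :=
            integral_mono_ae integrable_condExp (integrable_const _) (hvar t h1 h2)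
        _ = σ ^ 2 := by simp
    -- expansions
    have hgexp : ∀ ω, ‖g ω‖ ^ 2 = ‖u ω‖ ^ 2 + 2 * ⟪u ω, ξ t ω⟫ + ‖ξ t ω‖ ^ 2 := fun ω =>
      norm_add_sq_real (u ω) (ξ t ω)
    have hAexp : ∀ ω, ⟪u ω, g ω⟫ = ‖u ω‖ ^ 2 + ⟪u ω, ξ t ω⟫ := by
      intro ω
      rw [hgdef]
      simp only []
      rw [inner_add_right, real_inner_self_eq_norm_sq]
    have hg2int : Integrable (fun ω => ‖g ω‖ ^ 2) μ := by
      have : (fun ω => ‖g ω‖ ^ 2)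
          = fun ω => ‖u ω‖ ^ 2 + 2 * ⟪u ω, ξ t ω⟫ + ‖ξ t ω‖ ^ 2 := funext hgexp
      rw [this]
      exact (hu2int.add (hinnerint.const_mul 2)).add (hξint2 t)
    have hAint : Integrable (fun ω => ⟪u ω, g ω⟫) μ := by
      have : (fun ω => ⟪u ω, g ω⟫) = fun ω => ‖u ω‖ ^ 2 + ⟪u ω, ξ t ω⟫ := funext hAexp
      rw [this]
      exact hu2int.add hinnerint
    -- moments
    have hq1 : ∫ ω, ⟪u ω, g ω⟫ ∂μ = G s := by
      have : (fun ω => ⟪u ω, g ω⟫) = fun ω => ‖u ω‖ ^ 2 + ⟪u ω, ξ t ω⟫ := funext hAexp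
      rw [this, integral_add (f := fun ω => ‖u ω‖ ^ 2) (g := fun ω => ⟪u ω, ξ t ω⟫)
        hu2int hinnerint, hzm, add_zero]
    have hq2 : ∫ ω, ‖g ω‖ ^ 2 ∂μ ≤ G s + σ ^ 2 := by
      have : (fun ω => ‖g ω‖ ^ 2)
          = fun ω => ‖u ω‖ ^ 2 + 2 * ⟪u ω, ξ t ω⟫ + ‖ξ t ω‖ ^ 2 := funext hgexp
      rw [this, integral_add (f := fun ω => ‖u ω‖ ^ 2 + 2 * ⟪u ω, ξ t ω⟫)
          (g := fun ω => ‖ξ t ω‖ ^ 2) (hu2int.add (hinnerint.const_mul 2)) (hξint2 t),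
        integral_add (f := fun ω => ‖u ω‖ ^ 2) (g := fun ω => 2 * ⟪u ω, ξ t ω⟫)
          hu2int (hinnerint.const_mul 2), integral_const_mul, hzm]
      simp only [mul_zero, add_zero]
      exact add_le_add (le_refl (G s)) hxi2
    -- Cauchy-Schwarz
    set p : Ω → ℝ := fun ω => |⟪u ω, g ω⟫| / ‖g ω‖ with hpdef
    set q : Ω → ℝ := fun ω => ‖g ω‖ with hqdef
    have hpq : ∀ ω, p ω * q ω = |⟪u ω, g ω⟫| := by
      intro ω
      by_cases hg0 : g ω = 0
      · simp [hpdef, hqdef, hg0, inner_zero_right]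
      · exact div_mul_cancel₀ _ (norm_ne_zero_iff.mpr hg0)
    have hp2 : ∀ ω, p ω ^ 2 = 2 * L * D t ω := by
      intro ω
      have hDval : D t ω = ⟪u ω, g ω⟫ ^ 2 / (2 * L * ‖g ω‖ ^ 2) := rfl
      rw [hpdef]
      simp only []
      rw [div_pow, sq_abs, hDval]
      by_cases hg0 : g ω = 0
      · simp [hg0, inner_zero_right]
      · have hne : (0:ℝ) < ‖g ω‖ ^ 2 := pow_pos (norm_pos_iff.mpr hg0) 2
        rw [mul_div_assoc']
        rw [mul_div_mul_left _ _ (by positivity : (0:ℝ) < 2 * L).ne']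
    have hp2int : Integrable (fun ω => p ω ^ 2) μ := by
      have : (fun ω => p ω ^ 2) = fun ω => 2 * L * D t ω := funext hp2
      rw [this]
      exact (hDint t h1 h2).const_mul _
    have hq2int : Integrable (fun ω => q ω ^ 2) μ := hg2int
    have hpqint : Integrable (fun ω => p ω * q ω) μ := by
      have : (fun ω => p ω * q ω) = fun ω => |⟪u ω, g ω⟫| := funext hpq
      rw [this]
      exact hAint.abs
    have hGle : G s ≤ ∫ ω, p ω * q ω ∂μ := by
      rw [← hq1]
      refine integral_mono hAint hpqint fun ω => ?_
      rw [hpq ω]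
      exact le_abs_self _
    have hcs' : (∫ ω, p ω * q ω ∂μ) ^ 2 ≤ (∫ ω, p ω ^ 2 ∂μ) * ∫ ω, q ω ^ 2 ∂μ := by
      refine my_cs (fun ω => ?_) (fun ω => norm_nonneg _) hp2int hq2int hpqint
      exact div_nonneg (abs_nonneg _) (norm_nonneg _)
    have hGsq : G s ^ 2 ≤ (2 * L * ∫ ω, D t ω ∂μ) * (G s + σ ^ 2) := by
      have h1' : G s ^ 2 ≤ (∫ ω, p ω * q ω ∂μ) ^ 2 :=
        pow_le_pow_left₀ (hGnonneg s) hGle 2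
      have h2' : ∫ ω, p ω ^ 2 ∂μ = 2 * L * ∫ ω, D t ω ∂μ := by
        have : (fun ω => p ω ^ 2) = fun ω => 2 * L * D t ω := funext hp2
        rw [this, integral_const_mul]
      have h3' : ∫ ω, q ω ^ 2 ∂μ ≤ G s + σ ^ 2 := hq2
      have h4' : (0:ℝ) ≤ ∫ ω, p ω ^ 2 ∂μ := integral_nonneg fun ω => sq_nonneg _
      calc G s ^ 2 ≤ (∫ ω, p ω * q ω ∂μ) ^ 2 := h1'
        _ ≤ (∫ ω, p ω ^ 2 ∂μ) * ∫ ω, q ω ^ 2 ∂μ := hcs'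
        _ ≤ (∫ ω, p ω ^ 2 ∂μ) * (G s + σ ^ 2) := mul_le_mul_of_nonneg_left h3' h4'
        _ = (2 * L * ∫ ω, D t ω ∂μ) * (G s + σ ^ 2) := by rw [h2']
    have hden : (0:ℝ) < G s + σ ^ 2 := by positivity
    rw [div_le_iff₀ hden]
    exact hGsq
  -- telescoping
  have htel : ∀ m, m ≤ T - 1 →
      (∑ s ∈ Finset.Icc 1 m, G s ^ 2 / (G s + σ ^ 2) / (2 * L)) ≤ J 1 - J (m + 1) := by
    intro m
    induction m with
    | zero => intro _; simp
    | succ n ih =>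
      intro hm
      rw [Finset.sum_Icc_succ_top (by omega : 1 ≤ n + 1)]
      have hstep' := hJstep (n + 2) (by omega) (by omega)
      simp only [show n + 2 - 1 = n + 1 by omega] at hstep'
      have hpt := hptstep (n + 2) (by omega) (by omega)
      simp only [show n + 2 - 1 = n + 1 by omega] at hpt
      have hD' : G (n + 1) ^ 2 / (G (n + 1) + σ ^ 2) / (2 * L) ≤ ∫ ω, D (n + 2) ω ∂μ := by
        rw [div_le_iff₀ (by positivity : (0:ℝ) < 2 * L)]
        linarith [hpt]
      have := ih (by omega) 
      linarith [this, hD', hstep']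
  -- last term
  have hlast : G T ^ 2 / (G T + σ ^ 2) / (2 * L) ≤ J T - f xstar := by
    have h1' : G T ≤ 2 * L * (J T - f xstar) := by
      have hle : (fun ω => ‖gradient f (x T ω)‖ ^ 2)
          ≤ fun ω => 2 * L * (f (x T ω) - f xstar) := fun ω => hPL (x T ω)
      have hint2 : Integrable (fun ω => 2 * L * (f (x T ω) - f xstar)) μ :=
        (((hfint T le_rfl).sub (integrable_const _)).const_mul _)
      have := integral_mono (hgradint T le_rfl) hint2 hle
      rw [integral_const_mul, integral_sub (hfint T le_rfl) (integrable_const _)] at this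
      simpa using this
    have h2' : G T ^ 2 / (G T + σ ^ 2) ≤ G T := by
      rw [div_le_iff₀ (by positivity : (0:ℝ) < G T + σ ^ 2)]
      nlinarith [hGnonneg T, sq_nonneg σ, hσ]
    rw [div_le_iff₀ (by positivity : (0:ℝ) < 2 * L)]
    calc G T ^ 2 / (G T + σ ^ 2) ≤ G T := h2'
      _ ≤ 2 * L * (J T - f xstar) := h1'
      _ = (J T - f xstar) * (2 * L) := by ring
  -- J 1 ≤ f x₀
  have hJ1 : J 1 ≤ f x₀ := by
    have hle : (fun ω => f (x 1 ω)) ≤ fun _ω => f x₀ := fun ω => hfx0 1 hT ω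
    have := integral_mono (hfint 1 hT) (integrable_const _) hle
    simpa using this
  -- total sum bound
  have hsum : (∑ s ∈ Finset.Icc 1 T, G s ^ 2 / (G s + σ ^ 2)) ≤ 2 * L * R := by
    have h1' := htel (T - 1) le_rfl
    rw [show T - 1 + 1 = T by omega] at h1'
    have h2' : (∑ s ∈ Finset.Icc 1 T, G s ^ 2 / (G s + σ ^ 2) / (2 * L)) ≤ R := by
      rw [show T = (T - 1) + 1 by omega, Finset.sum_Icc_succ_top (by omega : 1 ≤ T - 1 + 1),
        show T - 1 + 1 = T by omega]
      linarith [h1', hlast, hJ1, hfR]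
    have h3' : (∑ s ∈ Finset.Icc 1 T, G s ^ 2 / (G s + σ ^ 2) / (2 * L))
        = (∑ s ∈ Finset.Icc 1 T, G s ^ 2 / (G s + σ ^ 2)) / (2 * L) := by
      rw [Finset.sum_div]
    rw [h3'] at h2'
    rw [div_le_iff₀ (by positivity : (0:ℝ) < 2 * L)] at h2'
    linarith [h2']
  -- averaging
  have hcard : (Finset.Icc 1 T).card = T := by
    rw [Nat.card_Icc]
    omega
  have havg : ∃ s ∈ Finset.Icc 1 T, G s ^ 2 / (G s + σ ^ 2) ≤ 2 * L * R / T := by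
    refine Finset.exists_le_of_sum_le ⟨1, by simp [Finset.mem_Icc]; omega⟩ ?_
    calc (∑ s ∈ Finset.Icc 1 T, G s ^ 2 / (G s + σ ^ 2)) ≤ 2 * L * R := hsum
      _ = ∑ _s ∈ Finset.Icc 1 T, 2 * L * R / T := by
        rw [Finset.sum_const, hcard, nsmul_eq_mul]
        field_simp
  obtain ⟨s, hsmem, hsle⟩ := havg
  rw [Finset.mem_Icc] at hsmem
  refine ⟨s, hsmem.1, hsmem.2, ?_⟩
  have hc0 : (0:ℝ) ≤ 2 * L * R / T := by positivity
  have hGsq : G s ^ 2 ≤ 2 * L * R / T * (G s + σ ^ 2) := by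
    rw [div_le_iff₀ (by positivity : (0:ℝ) < G s + σ ^ 2)] at hsle
    linarith [hsle]
  exact my_final (hGnonneg s) hc0 hσ hGsq
end

section
/- Let Δ and ξ be random vectors in ℝ^d on a common probability space with E[⟨Δ, ξ⟩] = 0 and E[‖ξ‖²] ≤ σ², and set g = Δ + ξ. Assume g ≠ 0 almost surely and that all the relevant expectations are finite. Then (E[‖Δ‖²])² ≤ E[⟨Δ, g⟩² / ‖g‖²] · (E[‖Δ‖²] + σ²). -/
open MeasureTheory
open scoped RealInnerProductSpace

/-- For random vectors `Δ, ξ` with `E⟨Δ, ξ⟩ = 0`, `E‖ξ‖² ≤ σ²`,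
`g = Δ + ξ` nonzero almost surely, and all relevant expectations finite,
`(E[‖Δ‖²])² ≤ E[⟨Δ, g⟩²/‖g‖²] · (E[‖Δ‖²] + σ²)`. -/
theorem stmt_11 {d : ℕ} {σ : ℝ}
    {Ω : Type*} [MeasurableSpace Ω] {μ : Measure Ω} [IsProbabilityMeasure μ]
    (Δ ξ : Ω → EuclideanSpace ℝ (Fin d))
    (hmean : ∫ ω, ⟪Δ ω, ξ ω⟫ ∂μ = 0)
    (hvar : ∫ ω, ‖ξ ω‖ ^ 2 ∂μ ≤ σ ^ 2)
    (hg : ∀ᵐ ω ∂μ, Δ ω + ξ ω ≠ 0)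
    (h1 : Integrable (fun ω => ‖Δ ω‖ ^ 2) μ)
    (h2 : Integrable (fun ω => ‖ξ ω‖ ^ 2) μ)
    (h3 : Integrable (fun ω => ⟪Δ ω, ξ ω⟫) μ)
    (h4 : Integrable (fun ω => ⟪Δ ω, Δ ω + ξ ω⟫ ^ 2 / ‖Δ ω + ξ ω‖ ^ 2) μ)
    (h5 : Integrable (fun ω => ‖Δ ω + ξ ω‖ ^ 2) μ) :
    (∫ ω, ‖Δ ω‖ ^ 2 ∂μ) ^ 2 ≤
      (∫ ω, ⟪Δ ω, Δ ω + ξ ω⟫ ^ 2 / ‖Δ ω + ξ ω‖ ^ 2 ∂μ) *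
        ((∫ ω, ‖Δ ω‖ ^ 2 ∂μ) + σ ^ 2) := by
  set g : Ω → EuclideanSpace ℝ (Fin d) := fun ω => Δ ω + ξ ω with hgdef
  set f : Ω → ℝ := fun ω => ⟪Δ ω, g ω⟫ / ‖g ω‖ with hfdef
  set h : Ω → ℝ := fun ω => ‖g ω‖ with hhdef
  set I : ℝ := ∫ ω, ‖Δ ω‖ ^ 2 ∂μ with hI
  set A : ℝ := ∫ ω, ⟪Δ ω, g ω⟫ ^ 2 / ‖g ω‖ ^ 2 ∂μ with hA
  -- f ^ 2 = the integrand of A pointwise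
  have hfsq : ∀ ω, f ω ^ 2 = ⟪Δ ω, g ω⟫ ^ 2 / ‖g ω‖ ^ 2 := by
    intro ω; simp [hfdef, div_pow]
  -- f * h = ⟪Δ, g⟫ a.e.
  have hfh : (fun ω => f ω * h ω) =ᵐ[μ] fun ω => ⟪Δ ω, g ω⟫ := by
    filter_upwards [hg] with ω hω
    have hn : ‖g ω‖ ≠ 0 := norm_ne_zero_iff.mpr hω
    simp only [hfdef, hhdef]
    exact div_mul_cancel₀ _ hn
  -- ⟪Δ, g⟫ is integrable
  have hiDg : Integrable (fun ω => ⟪Δ ω, g ω⟫) μ := by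
    have : (fun ω => ⟪Δ ω, g ω⟫) = fun ω => ‖Δ ω‖ ^ 2 + ⟪Δ ω, ξ ω⟫ := by
      funext ω
      rw [hgdef, inner_add_right, real_inner_self_eq_norm_sq]
    rw [this]
    exact h1.add h3
  have hifh : Integrable (fun ω => f ω * h ω) μ := hiDg.congr hfh.symm
  have hif2 : Integrable (fun ω => f ω ^ 2) μ := by
    simpa only [hfsq] using h4
  have hih2 : Integrable (fun ω => h ω ^ 2) μ := h5
  -- ∫ f * h = I
  have hB : ∫ ω, f ω * h ω ∂μ = I := by
    rw [integral_congr_ae hfh]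
    have : (fun ω => ⟪Δ ω, g ω⟫) = fun ω => ‖Δ ω‖ ^ 2 + ⟪Δ ω, ξ ω⟫ := by
      funext ω
      rw [hgdef, inner_add_right, real_inner_self_eq_norm_sq]
    rw [this, integral_add h1 h3, hmean, add_zero]
  -- ∫ h ^ 2 ≤ I + σ²
  have hC : ∫ ω, h ω ^ 2 ∂μ ≤ I + σ ^ 2 := by
    have hexp : (fun ω => h ω ^ 2) =
        fun ω => ‖Δ ω‖ ^ 2 + 2 * ⟪Δ ω, ξ ω⟫ + ‖ξ ω‖ ^ 2 := by
      funext ω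
      simp only [hhdef, hgdef]
      rw [norm_add_sq_real]
    have ha1 : Integrable (fun ω => ‖Δ ω‖ ^ 2 + 2 * ⟪Δ ω, ξ ω⟫) μ :=
      h1.add (h3.const_mul 2)
    rw [hexp, integral_add ha1 h2, integral_add h1 (h3.const_mul 2),
      integral_const_mul, hmean]
    simp only [mul_zero, add_zero]
    exact add_le_add (le_refl I) hvar
  -- A = ∫ f ^ 2 and A ≥ 0
  have hA2 : A = ∫ ω, f ω ^ 2 ∂μ := by
    simp only [hfsq]
    exact hA
  have hAnonneg : 0 ≤ A := by
    rw [hA2]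
    exact integral_nonneg fun ω => sq_nonneg _
  -- quadratic nonneg
  have hquad : ∀ t : ℝ, 0 ≤ A * (t * t) + (-2 * I) * t + ∫ ω, h ω ^ 2 ∂μ := by
    intro t
    rw [← sq]
    have hkey : A * t ^ 2 + (-2 * I) * t + ∫ ω, h ω ^ 2 ∂μ
        = ∫ ω, (t * f ω - h ω) ^ 2 ∂μ := by
      have : (fun ω => (t * f ω - h ω) ^ 2)
          = fun ω => t ^ 2 * f ω ^ 2 + ((-2 * t) * (f ω * h ω) + h ω ^ 2) := by
        funext ω; ring
      have hb1 : Integrable (fun ω => (-2 * t) * (f ω * h ω) + h ω ^ 2) μ :=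
        (hifh.const_mul _).add hih2
      rw [this, integral_add (hif2.const_mul _) hb1,
        integral_add (hifh.const_mul _) hih2, integral_const_mul, integral_const_mul,
        hB, hA2]
      ring
    rw [hkey]
    exact integral_nonneg fun ω => sq_nonneg _
  -- discriminant
  have hdisc := discrim_le_zero hquad
  rw [discrim] at hdisc
  have hIC : I ^ 2 ≤ A * ∫ ω, h ω ^ 2 ∂μ := by nlinarith [hdisc]
  calc I ^ 2 ≤ A * ∫ ω, h ω ^ 2 ∂μ := hIC
    _ ≤ A * (I + σ ^ 2) := mul_le_mul_of_nonneg_left hC hAnonneg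
end
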